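/- arXiv:0901.4888 — 5 statements merged into one kernel-verified Lean document; each statement's English description precedes it below -/
import Mathlib

section
/- Let L be a bounded distributive lattice and let f : Lⁿ → L be an order-preserving function satisfying condition (H) and its dual condition (H*). Then every function g = f_K^a obtained from f by substituting constants for variables (for any K ⊆ {1,…,n} and a ∈ Lⁿ) also satisfies condition (H) and its dual condition (H*) (with the interval bounds given by g's own values at the constant 0 and constant 1 vectors). -/
open Classical

variable {L : Type*}

section Defs

variable [DistribLattice L] [BoundedOrder L]

/-- The ternary median term. -/
def med (x y z : L) : L := (x ⊔ y) ⊓ (x ⊔ z) ⊓ (y ⊔ z)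

/-- Lattice polynomial functions of arity `n`: the smallest class of functions
`(Fin n → L) → L` containing projections and constants and closed under
pointwise binary meets and joins. -/
inductive IsLatticePolynomial {n : ℕ} : ((Fin n → L) → L) → Prop
  | proj (k : Fin n) : IsLatticePolynomial fun x => x k
  | const (c : L) : IsLatticePolynomial fun _ => c
  | inf {f g : (Fin n → L) → L} :
      IsLatticePolynomial f → IsLatticePolynomial g →
      IsLatticePolynomial fun x => f x ⊓ g x
  | sup {f g : (Fin n → L) → L} :
      IsLatticePolynomial f → IsLatticePolynomial g →
      IsLatticePolynomial fun x => f x ⊔ g x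

/-- Unary lattice polynomial functions: the smallest class of functions `L → L`
containing the identity and constants and closed under pointwise binary meets
and joins. -/
inductive IsUnaryLatticePolynomial : (L → L) → Prop
  | id : IsUnaryLatticePolynomial fun x : L => x
  | const (c : L) : IsUnaryLatticePolynomial fun _ => c
  | inf {f g : L → L} :
      IsUnaryLatticePolynomial f → IsUnaryLatticePolynomial g →
      IsUnaryLatticePolynomial fun x => f x ⊓ g x
  | sup {f g : L → L} :
      IsUnaryLatticePolynomial f → IsUnaryLatticePolynomial g →
      IsUnaryLatticePolynomial fun x => f x ⊔ g x

/-- `h : L → L` preserves binary meets. -/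
def PreservesInf (h : L → L) : Prop := ∀ x y : L, h (x ⊓ y) = h x ⊓ h y

/-- `h : L → L` preserves binary joins. -/
def PreservesSup (h : L → L) : Prop := ∀ x y : L, h (x ⊔ y) = h x ⊔ h y

/-- Condition (H): `f(x ∧ c̄) = f(x) ∧ c` for all `c ∈ [f(0̄), f(1̄)]`. -/
def CondH {n : ℕ} (f : (Fin n → L) → L) : Prop :=
  ∀ (x : Fin n → L) (c : L), f (fun _ => ⊥) ≤ c → c ≤ f (fun _ => ⊤) →
    (f fun i => x i ⊓ c) = f x ⊓ c

/-- Condition (H*), the dual of (H): `f(x ∨ c̄) = f(x) ∨ c` for all `c ∈ [f(0̄), f(1̄)]`. -/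
def CondHDual {n : ℕ} (f : (Fin n → L) → L) : Prop :=
  ∀ (x : Fin n → L) (c : L), f (fun _ => ⊥) ≤ c → c ≤ f (fun _ => ⊤) →
    (f fun i => x i ⊔ c) = f x ⊔ c

/-- Condition (V): `f(x) = f(x ∧ c̄) ∨ f([x]_c)` for all `c ∈ [f(0̄), f(1̄)]`,
where the `i`-th component of `[x]_c` is `0` if `x i ≤ c`, and `x i` otherwise. -/
def CondV {n : ℕ} (f : (Fin n → L) → L) : Prop :=
  ∀ (x : Fin n → L) (c : L), f (fun _ => ⊥) ≤ c → c ≤ f (fun _ => ⊤) →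
    f x = (f fun i => x i ⊓ c) ⊔ (f fun i => if x i ≤ c then ⊥ else x i)

/-- Condition (V*), the dual of (V): `f(x) = f(x ∨ c̄) ∧ f([x]^c)` for all
`c ∈ [f(0̄), f(1̄)]`, where the `i`-th component of `[x]^c` is `1` if `c ≤ x i`,
and `x i` otherwise. -/
def CondVDual {n : ℕ} (f : (Fin n → L) → L) : Prop :=
  ∀ (x : Fin n → L) (c : L), f (fun _ => ⊥) ≤ c → c ≤ f (fun _ => ⊤) →
    f x = (f fun i => x i ⊔ c) ⊓ (f fun i => if c ≤ x i then ⊤ else x i)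

/-- Condition (I): `f(c̄) = c` for all `c ∈ [f(0̄), f(1̄)]`. -/
def CondI {n : ℕ} (f : (Fin n → L) → L) : Prop :=
  ∀ c : L, f (fun _ => ⊥) ≤ c → c ≤ f (fun _ => ⊤) → f (fun _ => c) = c

/-- A subset `S` of `L` is convex if `a ≤ b ≤ c` with `a, c ∈ S` implies `b ∈ S`. -/
def IsConvexSubset (S : Set L) : Prop :=
  ∀ ⦃a b c : L⦄, a ∈ S → c ∈ S → a ≤ b → b ≤ c → b ∈ S

/-- For every function `g = f_K^a` obtained from `f` by substituting constants for
variables (including `K = ∅`, i.e. `g = f`), the diagonal `δ_g` preserves binary meets.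
Here `δ_{f_K^a}(x) = f(y)` where `y i = a i` for `i ∈ K` and `y i = x` otherwise. -/
def DiagSubstPreservesInf {n : ℕ} (f : (Fin n → L) → L) : Prop :=
  ∀ (K : Set (Fin n)) (a : Fin n → L) (x y : L),
    (f fun i => if i ∈ K then a i else x ⊓ y) =
      (f fun i => if i ∈ K then a i else x) ⊓ (f fun i => if i ∈ K then a i else y)

/-- For every function `g = f_K^a` obtained from `f` by substituting constants for
variables (including `K = ∅`, i.e. `g = f`), the diagonal `δ_g` preserves binary joins. -/
def DiagSubstPreservesSup {n : ℕ} (f : (Fin n → L) → L) : Prop :=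
  ∀ (K : Set (Fin n)) (a : Fin n → L) (x y : L),
    (f fun i => if i ∈ K then a i else x ⊔ y) =
      (f fun i => if i ∈ K then a i else x) ⊔ (f fun i => if i ∈ K then a i else y)

end Defs
/-- If an order-preserving function `f` satisfies (H) and (H*), then so
does every function `f_K^a` obtained from `f` by substituting constants for the
variables in `K` (with interval bounds given by the values of `f_K^a` at the constant
`0` and constant `1` vectors). Here `f_K^a` is encoded as the function on `Lⁿ`
ignoring the coordinates in `K`: `x ↦ f(y)` with `y i = a i` for `i ∈ K`, `y i = x i`
otherwise. -/
theorem subst_condH_condHDual_of_condH_condHDual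
    {L : Type*} [DistribLattice L] [BoundedOrder L] {n : ℕ}
    (f : (Fin n → L) → L) (hf : Monotone f)
    (hH : CondH f) (hHd : CondHDual f)
    (K : Set (Fin n)) (a : Fin n → L) :
    CondH (fun x : Fin n → L => f fun i => if i ∈ K then a i else x i) ∧
      CondHDual (fun x : Fin n → L => f fun i => if i ∈ K then a i else x i) := by
  have h0 : f (fun _ => ⊥) ≤ f fun i => if i ∈ K then a i else (⊥ : L) :=
    hf fun i => by by_cases h : i ∈ K <;> simp [h]
  have h1 : (f fun i => if i ∈ K then a i else (⊤ : L)) ≤ f (fun _ => ⊤) :=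
    hf fun i => by by_cases h : i ∈ K <;> simp [h]
  constructor
  · intro x c hc0 hc1
    simp only at hc0 hc1 ⊢
    have hcf0 : f (fun _ => ⊥) ≤ c := h0.trans hc0
    have hcf1 : c ≤ f (fun _ => ⊤) := hc1.trans h1
    apply le_antisymm
    · refine le_inf (hf fun i => ?_) ?_
      · by_cases h : i ∈ K <;> simp [h]
      · have key := hHd (fun i => if i ∈ K then a i else ⊥) c hcf0 hcf1
        have step : (f fun i => if i ∈ K then a i else x i ⊓ c) ≤
            f fun i => (if i ∈ K then a i else ⊥) ⊔ c :=
          hf fun i => by by_cases h : i ∈ K <;> simp [h, inf_le_right]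
        calc (f fun i => if i ∈ K then a i else x i ⊓ c)
            ≤ f fun i => (if i ∈ K then a i else ⊥) ⊔ c := step
          _ = (f fun i => if i ∈ K then a i else ⊥) ⊔ c := key
          _ ≤ c := sup_le hc0 le_rfl
    · have key := hH (fun i => if i ∈ K then a i else x i) c hcf0 hcf1
      calc (f fun i => if i ∈ K then a i else x i) ⊓ c
          = f fun i => (if i ∈ K then a i else x i) ⊓ c := key.symm
        _ ≤ f fun i => if i ∈ K then a i else x i ⊓ c :=
            hf fun i => by by_cases h : i ∈ K <;> simp [h]
  · intro x c hc0 hc1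
    simp only at hc0 hc1 ⊢
    have hcf0 : f (fun _ => ⊥) ≤ c := h0.trans hc0
    have hcf1 : c ≤ f (fun _ => ⊤) := hc1.trans h1
    apply le_antisymm
    · have key := hHd (fun i => if i ∈ K then a i else x i) c hcf0 hcf1
      calc (f fun i => if i ∈ K then a i else x i ⊔ c)
          ≤ f fun i => (if i ∈ K then a i else x i) ⊔ c :=
            hf fun i => by by_cases h : i ∈ K <;> simp [h]
        _ = (f fun i => if i ∈ K then a i else x i) ⊔ c := key
    · refine sup_le (hf fun i => ?_) ?_
      · by_cases h : i ∈ K <;> simp [h]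
      · have key := hH (fun i => if i ∈ K then a i else ⊤) c hcf0 hcf1
        have step : (f fun i => (if i ∈ K then a i else ⊤) ⊓ c) ≤
            f fun i => if i ∈ K then a i else x i ⊔ c :=
          hf fun i => by by_cases h : i ∈ K <;> simp [h, inf_le_left]
        calc c = (f fun i => if i ∈ K then a i else ⊤) ⊓ c := (inf_eq_right.mpr hc1).symm
          _ = f fun i => (if i ∈ K then a i else ⊤) ⊓ c := key.symm
          _ ≤ f fun i => if i ∈ K then a i else x i ⊔ c := step
end

section
/- Let L be a bounded distributive lattice and let C be a class of functions (C_n being a set of functions Lⁿ → L for each n ≥ 1) such that: (i) every unary member of C is a lattice polynomial function, and (ii) for n > 1, every unary function obtained from an n-ary member of C by substituting constants for n − 1 of its variables is also in C. Then every member of C is a lattice polynomial function. -/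
open Classical

variable {L : Type*}

section Aux
variable [DistribLattice L] [BoundedOrder L]

lemma unary_normal {p : L → L} (hp : IsUnaryLatticePolynomial p) :
    ∃ a b : L, b ≤ a ∧ ∀ x, p x = (x ⊓ a) ⊔ b := by
  induction hp with
  | id => exact ⟨⊤, ⊥, le_top, fun x => by simp⟩
  | const c => exact ⟨c, c, le_rfl, fun x => by simp⟩
  | inf hf hg ihf ihg =>
    obtain ⟨a, b, hba, hf'⟩ := ihf
    obtain ⟨c, d, hdc, hg'⟩ := ihg
    refine ⟨a ⊓ c, b ⊓ d, inf_le_inf hba hdc, fun x => ?_⟩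
    simp only [hf', hg']
    apply le_antisymm
    · rw [inf_sup_right, inf_sup_left, inf_sup_left]
      refine sup_le (sup_le ?_ ?_) (sup_le ?_ ?_)
      · exact le_sup_of_le_left (le_inf (inf_le_left.trans inf_le_left)
          (inf_le_inf inf_le_right inf_le_right))
      · exact le_sup_of_le_left (le_inf (inf_le_left.trans inf_le_left)
          (le_inf (inf_le_left.trans inf_le_right) (inf_le_right.trans hdc)))
      · exact le_sup_of_le_left (le_inf (inf_le_right.trans inf_le_left)
          (le_inf (inf_le_left.trans hba) (inf_le_right.trans inf_le_right)))
      · exact le_sup_right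
    · refine sup_le (le_inf ?_ ?_) (le_inf ?_ ?_)
      · exact le_sup_of_le_left (le_inf inf_le_left (inf_le_right.trans inf_le_left))
      · exact le_sup_of_le_left (le_inf inf_le_left (inf_le_right.trans inf_le_right))
      · exact le_sup_of_le_right inf_le_left
      · exact le_sup_of_le_right inf_le_right
  | sup hf hg ihf ihg =>
    obtain ⟨a, b, hba, hf'⟩ := ihf
    obtain ⟨c, d, hdc, hg'⟩ := ihg
    refine ⟨a ⊔ c, b ⊔ d, sup_le_sup hba hdc, fun x => ?_⟩
    simp only [hf', hg', inf_sup_left]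
    exact sup_sup_sup_comm _ _ _ _

lemma unary_eval {p : L → L} (hp : IsUnaryLatticePolynomial p) (x : L) :
    p x = (x ⊓ p ⊤) ⊔ p ⊥ := by
  obtain ⟨a, b, hba, h⟩ := unary_normal hp
  rw [h x, h ⊤, h ⊥]
  simp [sup_eq_left.mpr hba]

lemma unary_of_poly1 {f : (Fin 1 → L) → L} (hf : IsLatticePolynomial f) :
    IsUnaryLatticePolynomial (fun x : L => f (fun _ => x)) := by
  induction hf with
  | proj k => exact .id
  | const c => exact .const c
  | inf _ _ ihf ihg => exact .inf ihf ihg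
  | sup _ _ ihf ihg => exact .sup ihf ihg

lemma poly_of_unary {p : L → L} (hp : IsUnaryLatticePolynomial p) {n : ℕ} (k : Fin n) :
    IsLatticePolynomial (fun y : Fin n → L => p (y k)) := by
  induction hp with
  | id => exact .proj k
  | const c => exact .const c
  | inf _ _ ihf ihg => exact .inf ihf ihg
  | sup _ _ ihf ihg => exact .sup ihf ihg

lemma poly_init {n : ℕ} {g : (Fin n → L) → L} (hg : IsLatticePolynomial g) :
    IsLatticePolynomial (fun x : Fin (n+1) → L => g (Fin.init x)) := by
  induction hg with
  | proj k => exact .proj k.castSucc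
  | const c => exact .const c
  | inf _ _ ihf ihg => exact .inf ihf ihg
  | sup _ _ ihf ihg => exact .sup ihf ihg

lemma update_last_eq_snoc {m : ℕ} (x : Fin (m+1) → L) (c : L) :
    Function.update x (Fin.last m) c = Fin.snoc (Fin.init x) c := by
  funext i
  refine Fin.lastCases ?_ (fun j => ?_) i
  · simp
  · simp [Fin.snoc_castSucc, Function.update_of_ne (Fin.castSucc_lt_last j).ne, Fin.init]

lemma sections_poly : ∀ (n : ℕ) (f : (Fin (n+1) → L) → L),
    (∀ (a : Fin (n+1) → L) (k : Fin (n+1)),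
      IsUnaryLatticePolynomial (fun x => f (Function.update a k x))) →
    IsLatticePolynomial f := by
  intro n
  induction n with
  | zero =>
    intro f hf
    have hp := hf (fun _ => ⊥) 0
    have he : f = fun y => f (Function.update (fun _ => (⊥ : L)) 0 (y 0)) := by
      funext y
      congr 1
      funext i
      fin_cases i
      simp
    rw [he]
    exact poly_of_unary hp 0
  | succ m ih =>
    intro f hf
    have hbot : IsLatticePolynomial (fun y : Fin (m+1) → L => f (Fin.snoc y ⊥)) := by
      apply ih
      intro a k
      simp only [Fin.snoc_update]
      exact hf (Fin.snoc a ⊥) k.castSucc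
    have htop : IsLatticePolynomial (fun y : Fin (m+1) → L => f (Fin.snoc y ⊤)) := by
      apply ih
      intro a k
      simp only [Fin.snoc_update]
      exact hf (Fin.snoc a ⊤) k.castSucc
    have key : f = fun x => (x (Fin.last (m+1)) ⊓ f (Fin.snoc (Fin.init x) ⊤)) ⊔
        f (Fin.snoc (Fin.init x) ⊥) := by
      funext x
      have h0 := unary_eval (hf x (Fin.last (m+1))) (x (Fin.last (m+1)))
      simp only [Function.update_eq_self, update_last_eq_snoc] at h0
      exact h0
    rw [key]
    exact .sup (.inf (.proj (Fin.last (m+1))) (poly_init htop)) (poly_init hbot)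

end Aux
/-- Let `C` be a class of functions (with `C n` a set of `n`-ary
functions for each `n`) such that (i) every unary member of `C` is a lattice
polynomial function, and (ii) for `n > 1`, every unary function obtained from an
`n`-ary member of `C` by substituting constants for `n − 1` variables is in `C`.
Then every member of `C` (of arity `≥ 1`) is a lattice polynomial function. -/
theorem class_is_polynomial
    {L : Type*} [DistribLattice L] [BoundedOrder L]
    (C : ∀ n : ℕ, Set ((Fin n → L) → L))
    (h1 : ∀ f ∈ C 1, IsLatticePolynomial f)
    (h2 : ∀ n : ℕ, 1 < n → ∀ f ∈ C n, ∀ (a : Fin n → L) (k : Fin n),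
      (fun x : Fin 1 → L => f (Function.update a k (x 0))) ∈ C 1) :
    ∀ n : ℕ, 1 ≤ n → ∀ f ∈ C n, IsLatticePolynomial f := by
  intro n hn f hfC
  rcases eq_or_lt_of_le hn with h | h
  · subst h
    exact h1 f hfC
  · obtain ⟨m, rfl⟩ : ∃ m, n = m + 1 := ⟨n - 1, (Nat.succ_pred_eq_of_pos (by omega)).symm⟩
    apply sections_poly
    intro a k
    exact unary_of_poly1 (h1 _ (h2 (m + 1) h f hfC a k))
end

section
/- Let L be a bounded distributive lattice. A unary function f : L → L is a lattice polynomial function if and only if the range {f(x) : x ∈ L} is convex, f satisfies the idempotency equation f ∘ f = f, and f preserves ∧ and ∨. -/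
open Classical

variable {L : Type*}

section Aux

set_option linter.unusedSectionVars false

variable [DistribLattice L] [BoundedOrder L]

lemma key_inf_aux (a1 b1 a2 b2 x : L) (h1 : a1 ≤ b1) (h2 : a2 ≤ b2) :
    ((x ⊓ b1) ⊔ a1) ⊓ ((x ⊓ b2) ⊔ a2) = (x ⊓ (b1 ⊓ b2)) ⊔ (a1 ⊓ a2) := by
  apply le_antisymm
  · rw [inf_sup_right, inf_sup_left, inf_sup_left]
    apply sup_le
    apply sup_le
    · exact le_sup_of_le_left (by rw [← inf_inf_distrib_left])
    · exact le_sup_of_le_left (le_inf (inf_le_left.trans inf_le_left)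
        (le_inf (inf_le_left.trans inf_le_right) (inf_le_right.trans h2)))
    apply sup_le
    · exact le_sup_of_le_left (le_inf (inf_le_right.trans inf_le_left)
        (le_inf (inf_le_left.trans h1) (inf_le_right.trans inf_le_right)))
    · exact le_sup_right
  · apply sup_le
    · exact le_inf (le_sup_of_le_left (inf_le_inf_left _ inf_le_left))
        (le_sup_of_le_left (inf_le_inf_left _ inf_le_right))
    · exact le_inf (le_sup_of_le_right inf_le_left) (le_sup_of_le_right inf_le_right)

/-- Every unary lattice polynomial has the canonical form `x ↦ (x ⊓ b) ⊔ a`. -/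
lemma unary_poly_form {f : L → L} (hf : IsUnaryLatticePolynomial f) :
    ∃ a b : L, a ≤ b ∧ ∀ x, f x = (x ⊓ b) ⊔ a := by
  induction hf with
  | id => exact ⟨⊥, ⊤, bot_le, fun x => by simp⟩
  | const c => exact ⟨c, c, le_rfl, fun x => by simp⟩
  | inf hf hg ihf ihg =>
    obtain ⟨a1, b1, h1, e1⟩ := ihf
    obtain ⟨a2, b2, h2, e2⟩ := ihg
    exact ⟨a1 ⊓ a2, b1 ⊓ b2, inf_le_inf h1 h2,
      fun x => by simp only []; rw [e1, e2, key_inf_aux _ _ _ _ _ h1 h2]⟩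
  | sup hf hg ihf ihg =>
    obtain ⟨a1, b1, h1, e1⟩ := ihf
    obtain ⟨a2, b2, h2, e2⟩ := ihg
    refine ⟨a1 ⊔ a2, b1 ⊔ b2, sup_le_sup h1 h2, fun x => ?_⟩
    simp only []
    rw [e1, e2, sup_sup_sup_comm, ← inf_sup_left]

end Aux
/-- A unary function `f : L → L` is a lattice polynomial function iff
its range is convex, `f` is idempotent (`f ∘ f = f`), and `f` preserves `∧` and `∨`. -/
theorem isUnaryLatticePolynomial_iff_convex_idempotent_preserving
    {L : Type*} [DistribLattice L] [BoundedOrder L] (f : L → L) :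
    IsUnaryLatticePolynomial f ↔
      IsConvexSubset (Set.range f) ∧ f ∘ f = f ∧ PreservesInf f ∧ PreservesSup f := by
  constructor
  · intro hf
    obtain ⟨a, b, hab, e⟩ := unary_poly_form hf
    have hfix : ∀ z, a ≤ z → z ≤ b → f z = z := fun z hz1 hz2 => by
      rw [e, inf_eq_left.mpr hz2, sup_eq_left.mpr hz1]
    have hmem : ∀ x, a ≤ f x ∧ f x ≤ b := fun x => by
      rw [e]; exact ⟨le_sup_right, sup_le (inf_le_right.trans le_rfl) hab⟩
    refine ⟨?_, ?_, ?_, ?_⟩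
    · rintro u v w ⟨x, rfl⟩ ⟨y, rfl⟩ h1 h2
      exact ⟨v, hfix v ((hmem x).1.trans h1) (h2.trans (hmem y).2)⟩
    · funext x
      exact hfix (f x) (hmem x).1 (hmem x).2
    · intro x y
      rw [e x, e y, e (x ⊓ y), ← sup_inf_right, inf_inf_inf_comm, inf_idem]
    · intro x y
      rw [e x, e y, e (x ⊔ y), sup_sup_sup_comm, sup_idem, ← inf_sup_right]
  · rintro ⟨hconv, hidem, hinf, hsup⟩
    have hidem' : ∀ x, f (f x) = f x := fun x => congrFun hidem x
    have hmono : Monotone f := fun x y hxy => by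
      have := hinf x y
      rw [inf_eq_left.mpr hxy] at this
      exact le_of_eq_of_le this inf_le_right
    have ha : ∀ x, f ⊥ ≤ f x := fun x => hmono bot_le
    have hbb : ∀ x, f x ≤ f ⊤ := fun x => hmono le_top
    have key : ∀ x, f x = (x ⊓ f ⊤) ⊔ f ⊥ := by
      intro x
      have h1 : f ⊥ ≤ (x ⊓ f ⊤) ⊔ f ⊥ := le_sup_right
      have h2 : (x ⊓ f ⊤) ⊔ f ⊥ ≤ f ⊤ := sup_le inf_le_right (ha ⊤)
      obtain ⟨y, hy⟩ := hconv ⟨⊥, rfl⟩ ⟨⊤, rfl⟩ h1 h2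
      have hfix : f ((x ⊓ f ⊤) ⊔ f ⊥) = (x ⊓ f ⊤) ⊔ f ⊥ := by
        conv_lhs => rw [← hy]
        rw [hidem', hy]
      have : f ((x ⊓ f ⊤) ⊔ f ⊥) = (f x ⊓ f ⊤) ⊔ f ⊥ := by
        rw [hsup, hinf, hidem', hidem']
      rw [hfix] at this
      rw [this, inf_eq_left.mpr (hbb x), sup_eq_left.mpr (ha x)]
    have : f = fun x => (x ⊓ f ⊤) ⊔ f ⊥ := funext key
    rw [this]
    exact IsUnaryLatticePolynomial.sup
      (IsUnaryLatticePolynomial.inf IsUnaryLatticePolynomial.id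
        (IsUnaryLatticePolynomial.const (f ⊤)))
      (IsUnaryLatticePolynomial.const (f ⊥))
end

section
/- Let L be a bounded distributive lattice and f : L → L a unary function. The following conditions are equivalent: (i) f is a lattice polynomial function; (ii) f satisfies condition (H) (i.e., f(x ∧ c) = f(x) ∧ c for every x ∈ L and every c with f(0) ≤ c ≤ f(1)) and f preserves ∨; (iii) f satisfies condition (I) (i.e., f(c) = c for every c with f(0) ≤ c ≤ f(1)) and f preserves ∧ and ∨. -/
open Classical

variable {L : Type*}

section Aux

variable [DistribLattice L] [BoundedOrder L]

private lemma aux_inf_normal {a b a' b' x : L} (hab : a ≤ b) (hab' : a' ≤ b') :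
    (a ⊔ x ⊓ b) ⊓ (a' ⊔ x ⊓ b') = a ⊓ a' ⊔ x ⊓ (b ⊓ b') := by
  have key : ∀ {a b : L}, a ≤ b → a ⊔ x ⊓ b = (a ⊔ x) ⊓ b := by
    intro a b hab; rw [sup_inf_left, sup_eq_right.mpr hab]
  rw [key hab, key hab', key (inf_le_inf hab hab'), sup_inf_right, inf_inf_inf_comm]

/-- Normal form of a unary lattice polynomial. -/
private lemma unary_normal_form {f : L → L} (hf : IsUnaryLatticePolynomial f) :
    ∀ x, f x = f ⊥ ⊔ x ⊓ f ⊤ := by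
  induction hf with
  | id => intro x; simp
  | const c => intro x; simp
  | @inf f g hf hg ihf ihg =>
    intro x
    have hfab : f ⊥ ≤ f ⊤ := by simpa using ihf ⊤
    have hgab : g ⊥ ≤ g ⊤ := by simpa using ihg ⊤
    simp only [ihf x, ihg x]
    exact aux_inf_normal hfab hgab
  | @sup f g hf hg ihf ihg =>
    intro x
    simp only [ihf x, ihg x, inf_sup_left]
    rw [sup_sup_sup_comm]

private lemma normal_form_poly {f : L → L} (h : ∀ x, f x = f ⊥ ⊔ x ⊓ f ⊤) :
    IsUnaryLatticePolynomial f := by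
  have : f = fun x => f ⊥ ⊔ x ⊓ f ⊤ := funext h
  rw [this]
  exact .sup (.const _) (.inf .id (.const _))

/-- Shared derivation of the normal form from (I), sup-preservation and the
fixing property `f (x ⊓ f ⊤) = f x`. -/
private lemma normal_form_of_condI {f : L → L}
    (hI : ∀ c : L, f ⊥ ≤ c → c ≤ f ⊤ → f c = c)
    (hsup : PreservesSup f)
    (hfix : ∀ x, f (x ⊓ f ⊤) = f x) :
    ∀ x, f x = f ⊥ ⊔ x ⊓ f ⊤ := by
  have mono : ∀ a b : L, a ≤ b → f a ≤ f b := by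
    intro a b hab
    have : f (a ⊔ b) = f a ⊔ f b := hsup a b
    rw [sup_eq_right.mpr hab] at this
    rw [this]; exact le_sup_left
  have hbot_top : f ⊥ ≤ f ⊤ := mono _ _ bot_le
  intro x
  set y := x ⊓ f ⊤ with hy
  have hffbot : f (f ⊥) = f ⊥ := hI (f ⊥) le_rfl hbot_top
  have h1 : f (y ⊔ f ⊥) = y ⊔ f ⊥ :=
    hI _ le_sup_right (sup_le inf_le_right hbot_top)
  have h2 : f (y ⊔ f ⊥) = f y ⊔ f ⊥ := by rw [hsup y (f ⊥), hffbot]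
  have h3 : f y = f x := hfix x
  have h4 : f ⊥ ≤ f x := mono _ _ bot_le
  have : y ⊔ f ⊥ = f x ⊔ f ⊥ := by rw [← h1, h2, h3]
  rw [sup_eq_left.mpr h4] at this
  rw [← this, sup_comm]

end Aux

/-- For a unary function `f : L → L`, the following are equivalent:
(i) `f` is a lattice polynomial function; (ii) `f` satisfies condition (H) and
preserves `∨`; (iii) `f` satisfies condition (I) and preserves `∧` and `∨`. -/
theorem isUnaryLatticePolynomial_iff_condH_iff_condI
    {L : Type*} [DistribLattice L] [BoundedOrder L] (f : L → L) :
    (IsUnaryLatticePolynomial f ↔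
      ((∀ (x c : L), f ⊥ ≤ c → c ≤ f ⊤ → f (x ⊓ c) = f x ⊓ c) ∧ PreservesSup f)) ∧
    (IsUnaryLatticePolynomial f ↔
      ((∀ c : L, f ⊥ ≤ c → c ≤ f ⊤ → f c = c) ∧ PreservesInf f ∧ PreservesSup f)) := by
  -- forward consequences of the normal form
  have fwd : ∀ {g : L → L}, (∀ x, g x = g ⊥ ⊔ x ⊓ g ⊤) →
      (∀ (x c : L), g ⊥ ≤ c → c ≤ g ⊤ → g (x ⊓ c) = g x ⊓ c) ∧
      (∀ c : L, g ⊥ ≤ c → c ≤ g ⊤ → g c = c) ∧ PreservesInf g ∧ PreservesSup g := by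
    intro g h
    refine ⟨?_, ?_, ?_, ?_⟩
    · intro x c hbc hct
      rw [h (x ⊓ c), h x, inf_sup_right]
      have h1 : g ⊥ ⊓ c = g ⊥ := inf_eq_left.mpr hbc
      have h2 : x ⊓ c ⊓ g ⊤ = x ⊓ c := inf_eq_left.mpr (inf_le_right.trans hct)
      have h3 : x ⊓ g ⊤ ⊓ c = x ⊓ c := by
        rw [inf_assoc, inf_eq_right.mpr hct]
      rw [h1, h2, h3]
    · intro c hbc hct
      rw [h c, inf_eq_left.mpr hct, sup_eq_right.mpr hbc]
    · intro x y
      rw [h (x ⊓ y), h x, h y, ← sup_inf_left]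
      congr 1
      rw [← inf_assoc, inf_inf_distrib_right, ← inf_assoc]
    · intro x y
      rw [h (x ⊔ y), h x, h y, inf_sup_right, sup_sup_sup_comm, sup_idem]
  have monoOf : ∀ {g : L → L}, PreservesSup g → ∀ a b : L, a ≤ b → g a ≤ g b := by
    intro g hsup a b hab
    have : g (a ⊔ b) = g a ⊔ g b := hsup a b
    rw [sup_eq_right.mpr hab] at this
    rw [this]; exact le_sup_left
  constructor
  · constructor
    · intro hp
      obtain ⟨hH, _, _, hsup⟩ := fwd (unary_normal_form hp)
      exact ⟨hH, hsup⟩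
    · rintro ⟨hH, hsup⟩
      apply normal_form_poly
      have hmono := monoOf hsup
      have hbt : f ⊥ ≤ f ⊤ := hmono _ _ bot_le
      have hI : ∀ c : L, f ⊥ ≤ c → c ≤ f ⊤ → f c = c := by
        intro c hbc hct
        have := hH ⊤ c hbc hct
        rw [top_inf_eq, inf_eq_right.mpr hct] at this
        exact this
      apply normal_form_of_condI hI hsup
      intro x
      have := hH x (f ⊤) hbt le_rfl
      rw [inf_eq_left.mpr (hmono _ _ le_top)] at this
      exact this
  · constructor
    · intro hp
      obtain ⟨_, hI, hinf, hsup⟩ := fwd (unary_normal_form hp)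
      exact ⟨hI, hinf, hsup⟩
    · rintro ⟨hI, hinf, hsup⟩
      apply normal_form_poly
      have hmono := monoOf hsup
      have hbt : f ⊥ ≤ f ⊤ := hmono _ _ bot_le
      apply normal_form_of_condI hI hsup
      intro x
      rw [hinf x (f ⊤), hI (f ⊤) hbt le_rfl, inf_eq_left.mpr (hmono _ _ le_top)]
end

section
/- Let L be a bounded distributive lattice and let f : Lⁿ → L (n > 1) be an order-preserving function satisfying condition (H) and condition (V). Then for every k with 1 ≤ k ≤ n and every a ∈ L, the function f_k^a : L^{n−1} → L obtained from f by substituting the constant a for the kth variable also satisfies condition (H) and condition (V) (with the interval bounds given by f_k^a's own values at the constant 0 and constant 1 vectors). -/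
open Classical

variable {L : Type*}

/-- If an order-preserving function `f : Lⁿ → L` (`n > 1`) satisfies
conditions (H) and (V), then for every `k` and `a ∈ L`, the function `f_k^a` obtained
by fixing the `k`-th variable to `a` also satisfies (H) and (V) (with bounds given by
its own values at the constant `0` and `1` vectors). Here `f_k^a` is encoded as the
function on `Lⁿ` ignoring the `k`-th coordinate: `x ↦ f(update x k a)`. -/
theorem subst_condH_condV_of_condH_condV
    {L : Type*} [DistribLattice L] [BoundedOrder L] {n : ℕ} (hn : 1 < n)
    (f : (Fin n → L) → L) (hf : Monotone f)
    (hH : CondH f) (hV : CondV f) (k : Fin n) (a : L) :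
    CondH (fun x : Fin n → L => f (Function.update x k a)) ∧
      CondV (fun x : Fin n → L => f (Function.update x k a)) := by
  -- bounds transfer
  have hb0 : ∀ c : L, f (Function.update (fun _ => ⊥) k a) ≤ c → f (fun _ => ⊥) ≤ c := by
    intro c h
    exact le_trans (hf (by intro i; exact bot_le)) h
  have hb1 : ∀ c : L, c ≤ f (Function.update (fun _ => ⊤) k a) → c ≤ f (fun _ => ⊤) := by
    intro c h
    exact le_trans h (hf (by intro i; exact le_top))
  -- key lemma
  have key : ∀ (x : Fin n → L) (c : L),
      f (Function.update (fun _ => ⊥) k a) ≤ c → c ≤ f (Function.update (fun _ => ⊤) k a) →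
      f (Function.update (fun i => x i ⊓ c) k a) = f (fun i => Function.update x k a i ⊓ c) := by
    intro x c hb ht
    have hbf := hb0 c hb
    have htf := hb1 c ht
    set z : Fin n → L := Function.update (fun i => x i ⊓ c) k a with hz
    have h1 : (fun i => z i ⊓ c) = fun i => Function.update x k a i ⊓ c := by
      funext i
      by_cases hi : i = k
      · subst hi; simp [hz]
      · simp [hz, Function.update_of_ne hi, inf_assoc]
    -- f([z]_c) ≤ f z ⊓ c
    have hsmall : f (fun i => if z i ≤ c then ⊥ else z i) ≤ f z ⊓ c := by
      refine le_inf ?_ ?_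
      · exact hf (by intro i; by_cases h : z i ≤ c <;> simp [h])
      · have hle : (fun i => if z i ≤ c then ⊥ else z i) ≤ Function.update (fun _ => ⊥) k a := ?_
        · exact le_trans (hf hle) hb
        intro i
        by_cases hi : i = k
        · subst hi
          by_cases h : z i ≤ c <;> simp [h, hz] <;> split <;> simp
        · have : z i ≤ c := by simp [hz, Function.update_of_ne hi]
          simp [this, hi]
    have hVz := hV z c hbf htf
    have hHz := hH z c hbf htf
    have hze : f z = f (fun i => z i ⊓ c) := by
      rw [hHz]
      rw [hHz] at hVz
      calc f z = (f z ⊓ c) ⊔ f (fun i => if z i ≤ c then ⊥ else z i) := hVz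
        _ = f z ⊓ c := sup_eq_left.mpr hsmall
    rw [← h1, ← hze]
  refine ⟨?_, ?_⟩
  · -- CondH
    intro x c hb ht
    simp only at hb ht ⊢
    rw [key x c hb ht, hH (Function.update x k a) c (hb0 c hb) (hb1 c ht)]
  · -- CondV
    intro x c hb ht
    simp only at hb ht ⊢
    have hbf := hb0 c hb
    have htf := hb1 c ht
    set u : Fin n → L := Function.update x k a with hu
    have hVu := hV u c hbf htf
    have hkey := key x c hb ht
    set w : Fin n → L := Function.update (fun i => if x i ≤ c then ⊥ else x i) k a with hw
    have h2 : f (fun i => if u i ≤ c then ⊥ else u i) ≤ f w := by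
      refine hf ?_
      intro i
      by_cases hi : i = k
      · subst hi
        by_cases h : u i ≤ c <;> simp [h, hw, hu] <;> split <;> simp
      · simp [hw, hu, Function.update_of_ne hi]
    have hwu : f w ≤ f u := by
      refine hf ?_
      intro i
      by_cases hi : i = k
      · subst hi; simp [hw, hu]
      · by_cases h : x i ≤ c <;>
          simp [hw, hu, Function.update_of_ne hi, h]
    have hzu : f (Function.update (fun i => x i ⊓ c) k a) ≤ f u := by
      refine hf ?_
      intro i
      by_cases hi : i = k
      · subst hi; simp [hu]
      · simp [hu, Function.update_of_ne hi]
    refine le_antisymm ?_ (sup_le hzu hwu)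
    calc f u = f (fun i => u i ⊓ c) ⊔ f (fun i => if u i ≤ c then ⊥ else u i) := hVu
      _ ≤ f (Function.update (fun i => x i ⊓ c) k a) ⊔ f w := by
          rw [← hkey] at *
          exact sup_le_sup le_rfl h2
      _ = _ := rfl
end
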